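/- Let K₀ ⊂ K₁ ⊂ ⋯ ⊂ Kₙ be a tower of differential fields of characteristic zero where Kᵢ = Kᵢ₋₁(tᵢ) with each tᵢ transcendental over Kᵢ₋₁ and tᵢ′ ∈ Kᵢ₋₁, and C_{Kᵢ} = C_{Kᵢ₋₁} for all i. If t₁′, …, tₙ′ are linearly dependent over the constant field C = C_{K₀}, then some tᵢ′ ∈ Kᵢ₋₁′, contradicting the primitive generator property; hence t₁′, …, tₙ′ are C-linearly independent. -/

import Mathlib

/-- In a primitive tower `K₀ ⊂ K₁ ⊂ ⋯ ⊂ Kₙ` of differential fields of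
characteristic zero, where `Kᵢ = Kᵢ₋₁(tᵢ)` with `tᵢ` transcendental over
`Kᵢ₋₁`, `tᵢ′ ∈ Kᵢ₋₁`, and constants do not grow, the derivatives
`t₁′, …, tₙ′` are linearly independent over the constant field. -/
theorem primitive_tower_derivatives_linearly_independent
    (F : Type*) [Field F] [CharZero F]
    (δ : F → F)
    (hδadd : ∀ a b : F, δ (a + b) = δ a + δ b)
    (hδmul : ∀ a b : F, δ (a * b) = δ a * b + a * δ b)
    (n : ℕ) (t : Fin n → F) (K : Fin (n + 1) → Subfield F)
    (hclosed : ∀ i, ∀ a ∈ K i, δ a ∈ K i)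
    (hadj : ∀ i : Fin n,
      K i.succ = Subfield.closure ((K i.castSucc : Set F) ∪ {t i}))
    (htr : ∀ i : Fin n, Transcendental ↥(K i.castSucc) (t i))
    (hder : ∀ i : Fin n, δ (t i) ∈ K i.castSucc)
    (hconst : ∀ i : Fin n, ∀ y ∈ K i.succ, δ y = 0 → y ∈ K i.castSucc) :
    ∀ c : Fin n → F, (∀ i, c i ∈ K 0 ∧ δ (c i) = 0) →
      (∑ i, c i * δ (t i)) = 0 → ∀ i, c i = 0 := by
  -- δ as an additive monoid hom
  set D : F →+ F := AddMonoidHom.mk' δ hδadd with hD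
  have hDδ : ∀ a : F, D a = δ a := fun a => rfl
  -- one-step inclusion
  have hstep : ∀ i : Fin n, K i.castSucc ≤ K i.succ := by
    intro i x hx
    rw [hadj i]
    exact Subfield.subset_closure (Or.inl hx)
  -- t i ∈ K i.succ
  have ht : ∀ i : Fin n, t i ∈ K i.succ := by
    intro i
    rw [hadj i]
    exact Subfield.subset_closure (Or.inr rfl)
  -- monotonicity
  have hle : ∀ j i : Fin (n + 1), i ≤ j → K i ≤ K j := by
    intro j
    induction j using Fin.induction with
    | zero => intro i hi; rw [Fin.le_zero_iff] at hi; rw [hi]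
    | succ j ih =>
      intro i hi
      rcases lt_or_eq_of_le hi with h | h
      · exact (ih i (Fin.le_castSucc_iff.mpr h)).trans (hstep j)
      · rw [h]
  classical
  intro c hc hsum
  by_contra hcon
  push_neg at hcon
  obtain ⟨i0, hi0⟩ := hcon
  -- the constant combination u
  set u : F := ∑ i, c i * t i with hu
  have huK : u ∈ K (Fin.last n) := by
    apply Subfield.sum_mem
    intro i _
    exact Subfield.mul_mem _ (hle (Fin.last n) 0 (Fin.zero_le _) (hc i).1)
      (hle (Fin.last n) i.succ (Fin.le_last _) (ht i))
  have hδu : δ u = 0 := by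
    have : δ u = ∑ i, δ (c i * t i) := by
      rw [hu, ← hDδ, map_sum]
      simp [hDδ]
    rw [this]
    have : ∀ i, δ (c i * t i) = c i * δ (t i) := by
      intro i
      rw [hδmul, (hc i).2]
      ring
    simp only [this]
    exact hsum
  -- descend: u ∈ K 0
  have hdesc : ∀ j : Fin (n + 1), u ∈ K j → u ∈ K 0 := by
    intro j
    induction j using Fin.induction with
    | zero => exact id
    | succ j ih => intro h; exact ih (hconst j u h hδu)
  have huK0 : u ∈ K 0 := hdesc (Fin.last n) huK
  -- maximal nonzero index
  set S : Finset (Fin n) := Finset.univ.filter (fun i => c i ≠ 0) with hS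
  have hSne : S.Nonempty := ⟨i0, by simp [hS, hi0]⟩
  set j : Fin n := S.max' hSne with hj
  have hcj : c j ≠ 0 := by
    have := S.max'_mem hSne
    simp [hS] at this
    exact this
  have hmax : ∀ i : Fin n, c i ≠ 0 → i ≤ j := by
    intro i hi
    exact S.le_max' i (by simp [hS, hi])
  -- isolate t j
  have hsplit : u = c j * t j + ∑ i ∈ Finset.univ.erase j, c i * t i := by
    rw [hu, ← Finset.add_sum_erase _ _ (Finset.mem_univ j)]
  have hrest : (∑ i ∈ Finset.univ.erase j, c i * t i) ∈ K j.castSucc := by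
    apply Subfield.sum_mem
    intro i hi
    rcases eq_or_ne (c i) 0 with h | h
    · rw [h, zero_mul]; exact Subfield.zero_mem _
    · have hij : i < j := lt_of_le_of_ne (hmax i h) (Finset.ne_of_mem_erase hi)
      have : i.succ ≤ j.castSucc := by
        rw [Fin.le_def]; rw [Fin.lt_def] at hij
        simp; omega
      exact Subfield.mul_mem _
        (hle j.castSucc 0 (Fin.zero_le _) (hc i).1)
        (hle j.castSucc i.succ this (ht i))
  have htj : t j ∈ K j.castSucc := by
    have : t j = (c j)⁻¹ * (u - ∑ i ∈ Finset.univ.erase j, c i * t i) := by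
      rw [hsplit]; field_simp; ring
    rw [this]
    exact Subfield.mul_mem _ (Subfield.inv_mem _
        (hle j.castSucc 0 (Fin.zero_le _) (hc j).1))
      (Subfield.sub_mem _ (hle j.castSucc 0 (Fin.zero_le _) huK0) hrest)
  exact htr j (isAlgebraic_algebraMap (⟨t j, htj⟩ : ↥(K j.castSucc)))
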